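/- arXiv:1903.04214 — 7 statements merged into one kernel-verified Lean document; each statement's English description precedes it below -/
import Mathlib

section
/- Let Σ be a finite alphabet, let w be a nonempty finite partial word over Σ, and let p be an integer with p ≥ 2|w| such that |w| divides p. Suppose there exist a positive integer C and a language L of finite words over Σ such that: (I) the empty word belongs to L; (II) every u ∈ L avoids squares of period less than p; (III) for every u ∈ L there are at least C different words v ∈ Σ^{|w|} compatible with w such that uv ∈ L; and (IV) there exists a real number x with 0 < x < 1 such that C·(1 − x^{p/|w| − 1}·|w|²/(1 − x)) ≥ x^{−1}. Then the set S(w^ω) of finite square-free words over Σ compatible with the infinite partial word w^ω = www··· is infinite. -/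
/-- A finite word is square-free: no factor is of the form `v ++ v` with `v` nonempty. -/
def SqFree {α : Type*} (u : List α) : Prop :=
  ∀ v : List α, v ≠ [] → ¬ ((v ++ v) <:+: u)

/-- `u` avoids squares of period less than `p`. -/
def AvoidsSquaresLt {α : Type*} (p : ℕ) (u : List α) : Prop :=
  ∀ v : List α, v ≠ [] → v.length < p → ¬ ((v ++ v) <:+: u)

/-- `v` is compatible with the finite partial word `μ` (where `none` is the wildcard `⋄`). -/
def CompatFin {α : Type*} (v : List α) (μ : List (Option α)) : Prop :=
  v.length ≤ μ.length ∧
    ∀ i : ℕ, i < v.length → ∀ a : α, μ[i]? = some (some a) → v[i]? = some a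

/-- `v` is compatible with the infinite partial word `μ` (where `none` is the wildcard `⋄`). -/
def CompatInf {α : Type*} (v : List α) (μ : ℕ → Option α) : Prop :=
  ∀ i : ℕ, i < v.length → ∀ a : α, μ i = some a → v[i]? = some a

/-- The infinite partial word `w^ω = www⋯`. -/
def wOmega {α : Type*} (w : List (Option α)) : ℕ → Option α :=
  fun i => (w[i % w.length]?).join

set_option linter.unusedSectionVars false
namespace SqProof
attribute [local instance] Classical.propDecidable

variable {α : Type*} [Fintype α]

noncomputable def extF (w : List (Option α)) (C : ℕ) (L : Set (List α)) (u : List α) :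
    Finset (List α) :=
  if h : ∃ t : Finset (List α),
      (∀ v ∈ t, v.length = w.length ∧ CompatFin v w ∧ u ++ v ∈ L) ∧ t.card = C
  then h.choose else ∅

lemma extF_spec {w : List (Option α)} {C : ℕ} {L : Set (List α)} {u v : List α}
    (hv : v ∈ extF w C L u) : v.length = w.length ∧ CompatFin v w ∧ u ++ v ∈ L := by
  unfold extF at hv
  split at hv
  · next h => exact h.choose_spec.1 v hv
  · simp at hv

lemma extF_card_le (w : List (Option α)) (C : ℕ) (L : Set (List α)) (u : List α) :
    (extF w C L u).card ≤ C := by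
  unfold extF
  split
  · next h => exact le_of_eq h.choose_spec.2
  · simp

lemma extF_card {w : List (Option α)} {C : ℕ} {L : Set (List α)}
    (hIII : ∀ u ∈ L,
      C ≤ Set.ncard {v : List α | v.length = w.length ∧ CompatFin v w ∧ u ++ v ∈ L})
    {u : List α} (hu : u ∈ L) : (extF w C L u).card = C := by
  have hfin : {v : List α | v.length = w.length ∧ CompatFin v w ∧ u ++ v ∈ L}.Finite := by
    apply (List.finite_length_eq α w.length).subset
    intro v hv; exact hv.1
  have hc := hIII u hu
  rw [Set.ncard_eq_toFinset_card _ hfin] at hc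
  obtain ⟨t, hts, htc⟩ := Finset.exists_subset_card_eq hc
  have hex : ∃ t : Finset (List α),
      (∀ v ∈ t, v.length = w.length ∧ CompatFin v w ∧ u ++ v ∈ L) ∧ t.card = C := by
    refine ⟨t, fun v hv => ?_, htc⟩
    have := hts hv
    rw [Set.Finite.mem_toFinset] at this
    exact this
  unfold extF
  rw [dif_pos hex]
  exact hex.choose_spec.2

noncomputable def T (w : List (Option α)) (C : ℕ) (L : Set (List α)) : ℕ → Finset (List α)
  | 0 => {([] : List α)}
  | m+1 => (T w C L m).biUnion fun u =>
      ((extF w C L u).filter fun v => SqFree (u ++ v)).image fun v => u ++ v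

lemma mem_T_succ {w : List (Option α)} {C : ℕ} {L : Set (List α)} {m : ℕ} {u' : List α} :
    u' ∈ T w C L (m+1) ↔ ∃ u ∈ T w C L m, ∃ v ∈ extF w C L u, SqFree (u ++ v) ∧ u' = u ++ v := by
  simp only [T, Finset.mem_biUnion, Finset.mem_image, Finset.mem_filter]
  constructor
  · rintro ⟨u, hu, v, ⟨hv, hsf⟩, rfl⟩
    exact ⟨u, hu, v, hv, hsf, rfl⟩
  · rintro ⟨u, hu, v, hv, hsf, rfl⟩
    exact ⟨u, hu, v, ⟨hv, hsf⟩, rfl⟩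

lemma sqfree_nil : SqFree ([] : List α) := by
  intro v hv hinf
  have := hinf.length_le
  simp at this
  rcases v with _ | ⟨a, v⟩
  · exact hv rfl
  · simp at this

lemma compat_append {w : List (Option α)} {m : ℕ} {u v : List α}
    (hu : CompatInf u (wOmega w)) (hul : u.length = m * w.length)
    (hv : CompatFin v w) (hvl : v.length = w.length) :
    CompatInf (u ++ v) (wOmega w) := by
  intro i hi a ha
  by_cases h : i < u.length
  · rw [List.getElem?_append_left h]
    exact hu i h a ha
  · push_neg at h
    set j := i - u.length with hj
    have hij : i = m * w.length + j := by omega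
    have hjv : j < v.length := by
      rw [List.length_append] at hi; omega
    have hmod : i % w.length = j := by
      rw [hij, Nat.mul_comm, Nat.mul_add_mod]
      exact Nat.mod_eq_of_lt (by omega)
    rw [List.getElem?_append_right h, ← hj]
    unfold wOmega at ha
    rw [hmod] at ha
    rw [Option.join_eq_some_iff] at ha
    exact hv.2 j hjv a ha

lemma mem_T {w : List (Option α)} {C : ℕ} {L : Set (List α)} (hI : [] ∈ L) :
    ∀ {m : ℕ} {u : List α}, u ∈ T w C L m →
      u.length = m * w.length ∧ SqFree u ∧ u ∈ L ∧ CompatInf u (wOmega w) := by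
  intro m
  induction m with
  | zero =>
    intro u hu
    simp only [T, Finset.mem_singleton] at hu
    subst hu
    refine ⟨by simp, sqfree_nil, hI, ?_⟩
    intro i hi; simp at hi
  | succ m ih =>
    intro u' hu'
    rw [mem_T_succ] at hu'
    obtain ⟨u, hu, v, hv, hsf, rfl⟩ := hu'
    obtain ⟨hul, _, _, hcomp⟩ := ih hu
    obtain ⟨hvl, hvc, hmem⟩ := extF_spec hv
    refine ⟨by simp [hul, hvl]; ring, hsf, hmem, compat_append hcomp hul hvc hvl⟩

lemma mem_T_take {w : List (Option α)} {C : ℕ} {L : Set (List α)} (hI : [] ∈ L) :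
    ∀ {m : ℕ} {u : List α}, u ∈ T w C L m → ∀ j ≤ m, u.take (j * w.length) ∈ T w C L j := by
  intro m
  induction m with
  | zero =>
    intro u hu j hj
    interval_cases j
    simp only [T, Finset.mem_singleton] at hu
    subst hu
    simpa [T] using rfl
  | succ m ih =>
    intro u' hu' j hj
    rcases Nat.lt_or_ge j (m+1) with h | h
    · have hj' : j ≤ m := by omega
      rw [mem_T_succ] at hu'
      obtain ⟨u, hu, v, hv, hsf, rfl⟩ := hu'
      have hul := (mem_T hI hu).1
      have htake : (u ++ v).take (j * w.length) = u.take (j * w.length) := by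
        rw [List.take_append]
        have : j * w.length - u.length = 0 := by
          have : j * w.length ≤ m * w.length := Nat.mul_le_mul_right _ hj'
          omega
        rw [this]
        simp
      rw [htake]
      exact ih hu j hj'
    · have : j = m + 1 := by omega
      subst this
      have hul := (mem_T hI hu').1
      rw [List.take_of_length_le (le_of_eq hul)]
      exact hu'

lemma take_append_left {l₁ l₂ : List α} {e : ℕ} (h : e ≤ l₁.length) :
    (l₁ ++ l₂).take e = l₁.take e := by
  rw [List.take_append, Nat.sub_eq_zero_of_le h]
  simp

/-- the property extracted from a bad pair -/
def PqProp (p mn : ℕ) (X : List α) : Prop :=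
  ∃ a z b : List α, X = a ++ (z ++ z) ++ b ∧ z ≠ [] ∧ p ≤ z.length ∧
    mn < a.length + 2 * z.length

lemma bad_PqProp {p : ℕ} {L : Set (List α)}
    (hII : ∀ u ∈ L, AvoidsSquaresLt p u) {u v : List α}
    (hu : SqFree u) (hL : u ++ v ∈ L) (hbad : ¬ SqFree (u ++ v)) :
    PqProp p u.length (u ++ v) := by
  unfold SqFree at hbad
  push_neg at hbad
  obtain ⟨z, hz, hinf⟩ := hbad
  obtain ⟨a, b, hdec⟩ := hinf
  have hple : p ≤ z.length := by
    by_contra hlt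
    push_neg at hlt
    exact hII (u ++ v) hL z hz hlt ⟨a, b, hdec⟩
  refine ⟨a, z, b, hdec.symm, hz, hple, ?_⟩
  by_contra hle
  push_neg at hle
  apply hu z hz
  have hdec' : (a ++ (z ++ z)) ++ b = u ++ v := by
    rw [← hdec]
  have h1 : (u ++ v).take (a.length + 2 * z.length) = a ++ (z ++ z) := by
    rw [← hdec']
    exact List.take_left' (by simp; omega)
  have h2 : (u ++ v).take (a.length + 2 * z.length) = u.take (a.length + 2 * z.length) := by
    rw [take_append_left hle]
  have h3 : a ++ (z ++ z) = u.take (a.length + 2 * z.length) := by rw [← h1, h2]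
  have h4 : (z ++ z) <:+: a ++ (z ++ z) := ⟨a, [], by simp⟩
  exact h4.trans (h3 ▸ (List.take_prefix _ _).isInfix)

noncomputable def clsF (p n m : ℕ) (X : List α) : ℕ × ℕ × ℕ :=
  if h : PqProp p (m * n) X then
    let a := h.choose
    let z := h.choose_spec.choose
    ((m+1)*n - (a.length + 2*z.length),
     (((a.length + z.length) + n - 1)/n) * n - (a.length + z.length),
     ((a.length + z.length) + n - 1)/n)
  else (0,0,0)

lemma clsF_spec {p n m : ℕ} {X : List α} (h : PqProp p (m * n) X) :
    ∃ a z b : List α, X = a ++ (z ++ z) ++ b ∧ z ≠ [] ∧ p ≤ z.length ∧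
      m*n < a.length + 2*z.length ∧
      clsF p n m X = ((m+1)*n - (a.length + 2*z.length),
        (((a.length + z.length) + n - 1)/n) * n - (a.length + z.length),
        ((a.length + z.length) + n - 1)/n) := by
  obtain ⟨h1, h2, h3, h4⟩ := h.choose_spec.choose_spec.choose_spec
  exact ⟨h.choose, h.choose_spec.choose, h.choose_spec.choose_spec.choose,
    h1, h2, h3, h4, by unfold clsF; rw [dif_pos h]⟩

/-- recovery function -/
def recov (n m : ℕ) (c : ℕ × ℕ × ℕ) (P : List α) : List α :=
  let l := c.2.2 * n - c.2.1
  let q := ((m+1)*n - c.1) - l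
  ((P.take l) ++ (P.take l).drop (l - q)).take (m*n)

lemma ceil_div_facts {n : ℕ} (hn : 0 < n) (l : ℕ) :
    l ≤ ((l + n - 1)/n) * n ∧ ((l + n - 1)/n) * n < l + n ∧
    ∀ t : ℕ, l ≤ t * n → (l + n - 1)/n ≤ t := by
  set a := l + n - 1 with ha
  have h1 := Nat.div_add_mod a n
  have h2 := Nat.mod_lt a hn
  have h3 : a / n * n = n * (a / n) := Nat.mul_comm _ _
  refine ⟨by omega, by omega, ?_⟩
  intro t ht
  rw [Nat.div_le_iff_le_mul_add_pred hn]
  have : n * t = t * n := Nat.mul_comm _ _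
  omega

lemma bad_facts {p n k m : ℕ} (hn : 0 < n) (hk : 2 ≤ k) (hkn : p = k * n)
    {u v : List α} (hul : u.length = m * n) (hvl : v.length = n)
    (h : PqProp p (m * n) (u ++ v)) :
    (clsF p n m (u++v)).1 < n ∧ (clsF p n m (u++v)).2.1 < n ∧
    (clsF p n m (u++v)).2.2 < m + 2 - k ∧ (clsF p n m (u++v)).2.2 ≤ m ∧
    recov n m (clsF p n m (u++v)) ((u++v).take ((clsF p n m (u++v)).2.2 * n)) = u := by
  obtain ⟨a, z, b, hX, hz, hpq, hgt, hcls⟩ := clsF_spec h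
  set q := z.length with hq
  set la := a.length with hla
  set l := la + q with hl
  set e := la + 2*q with he
  set m' := (l + n - 1)/n with hm'
  -- length facts
  have hXlen : (u ++ v).length = (m+1) * n := by
    simp [hul, hvl]; ring
  have hXlen2 : (u ++ v).length = e + b.length := by
    rw [hX]; simp; omega
  have hele : e ≤ (m+1) * n := by omega
  have hqp : k * n ≤ q := by omega
  have hkm : k ≤ m + 1 := by
    have h2q : 2 * (k*n) ≤ (m+1) * n := by omega
    have : k * n ≤ (m+1) * n := by omega
    exact Nat.le_of_mul_le_mul_right (by omega : k * n ≤ (m+1) * n) hn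
  have hsub : (m + 1 - k) * n + k * n = (m+1) * n := by
    rw [← Nat.add_mul]
    congr 1
    omega
  have hlle : l ≤ (m + 1 - k) * n := by omega
  obtain ⟨hc1, hc2, hc3⟩ := ceil_div_facts hn l
  rw [← hm'] at hc1 hc2
  have hsucc : (m+1) * n = m * n + n := Nat.succ_mul m n
  have hm'le : m' ≤ m + 1 - k := by rw [hm']; exact hc3 _ hlle
  have hm'm : m' ≤ m := by omega
  have hm'n : m' * n ≤ m * n := Nat.mul_le_mul_right _ hm'm
  have hm'lle : m' * n ≤ (m + 1 - k) * n := Nat.mul_le_mul_right _ hm'le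
  rw [hcls]
  simp only
  refine ⟨by omega, by omega, by omega, by omega, ?_⟩
  -- recovery
  unfold recov
  simp only
  have e1 : m' * n - (m' * n - l) = l := by omega
  have e2 : (m+1)*n - ((m+1)*n - e) = e := by omega
  rw [e1, e2]
  have e3 : e - l = q := by omega
  have e4 : l - q = la := by omega
  rw [e3, e4]
  -- compute takes
  have hXassoc : u ++ v = (a ++ z) ++ (z ++ b) := by
    rw [hX]; simp
  have ht1 : ((u ++ v).take (m' * n)).take l = (u ++ v).take l := by
    rw [List.take_take]
    congr 1
    omega
  have ht2 : (u ++ v).take l = a ++ z := by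
    rw [hXassoc]
    exact List.take_left' (by simp [hl, hla, hq])
  rw [ht1, ht2]
  have ht3 : (a ++ z).drop la = z := List.drop_left' (by rw [hla])
  rw [ht3]
  have hXassoc2 : u ++ v = (a ++ z ++ z) ++ b := by
    rw [hX]; simp
  calc (a ++ z ++ z).take (m * n)
      = ((a ++ z ++ z) ++ b).take (m * n) :=
        (take_append_left (by simp only [List.length_append]; omega)).symm
    _ = (u ++ v).take (m * n) := by rw [← hXassoc2]
    _ = u.take (m * n) := take_append_left (le_of_eq hul.symm)
    _ = u := by rw [← hul, List.take_length]

noncomputable def BadS (w : List (Option α)) (C : ℕ) (L : Set (List α)) (m : ℕ) :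
    Finset ((_ : List α) × List α) :=
  (T w C L m).sigma fun u => (extF w C L u).filter fun v => ¬ SqFree (u ++ v)

lemma card_T_succ {w : List (Option α)} {C : ℕ} {L : Set (List α)} (hI : [] ∈ L)
    (hIII : ∀ u ∈ L,
      C ≤ Set.ncard {v : List α | v.length = w.length ∧ CompatFin v w ∧ u ++ v ∈ L})
    (m : ℕ) :
    (T w C L (m+1)).card + (BadS w C L m).card = C * (T w C L m).card := by
  have h1 : (T w C L (m+1)).card
      = ∑ u ∈ T w C L m, ((extF w C L u).filter fun v => SqFree (u ++ v)).card := by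
    show ((T w C L m).biUnion _).card = _
    rw [Finset.card_biUnion]
    · exact Finset.sum_congr rfl fun u _ => Finset.card_image_of_injective _
        (fun v₁ v₂ hv => List.append_cancel_left hv)
    · intro u₁ h₁ u₂ h₂ hne
      rw [Function.onFun, Finset.disjoint_left]
      intro x hx1 hx2
      simp only [Finset.mem_image, Finset.mem_filter] at hx1 hx2
      obtain ⟨v₁, _, rfl⟩ := hx1
      obtain ⟨v₂, _, heq⟩ := hx2
      have hl1 := (mem_T hI h₁).1
      have hl2 := (mem_T hI h₂).1
      exact hne (List.append_inj heq.symm (by omega)).1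
  rw [h1, BadS, Finset.card_sigma, ← Finset.sum_add_distrib]
  have h2 : ∀ u ∈ T w C L m,
      ((extF w C L u).filter fun v => SqFree (u ++ v)).card
        + ((extF w C L u).filter fun v => ¬ SqFree (u ++ v)).card = C := by
    intro u hu
    rw [Finset.card_filter_add_card_filter_not]
    exact extF_card hIII (mem_T hI hu).2.2.1
  rw [Finset.sum_congr rfl h2, Finset.sum_const, smul_eq_mul, Nat.mul_comm]

lemma BadS_card_le {w : List (Option α)} {C : ℕ} {L : Set (List α)} {p k : ℕ}
    (hw : w ≠ []) (hI : [] ∈ L) (hII : ∀ u ∈ L, AvoidsSquaresLt p u)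
    (hk : 2 ≤ k) (hkn : p = k * w.length) (m : ℕ) :
    (BadS w C L m).card ≤
      ∑ c ∈ Finset.range w.length ×ˢ Finset.range w.length ×ˢ Finset.range (m + 2 - k),
        C * (T w C L c.2.2).card := by
  set n := w.length with hn
  have hn0 : 0 < n := by
    rw [hn]; exact List.length_pos_iff.mpr hw
  -- facts about any member of BadS
  have hfacts : ∀ s ∈ BadS w C L m,
      s.1 ∈ T w C L m ∧ s.2 ∈ extF w C L s.1 ∧
      PqProp p (m * n) (s.1 ++ s.2) ∧ s.1.length = m * n ∧ s.2.length = n := by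
    intro s hs
    rw [BadS, Finset.mem_sigma, Finset.mem_filter] at hs
    obtain ⟨hsT, hsE, hbad⟩ := hs
    obtain ⟨hlen, hsq, hL, _⟩ := mem_T hI hsT
    obtain ⟨hvlen, _, hvL⟩ := extF_spec hsE
    have h := bad_PqProp hII hsq hvL hbad
    rw [hlen] at h
    exact ⟨hsT, hsE, h, hlen, hvlen⟩
  have hmap : ∀ s ∈ BadS w C L m, clsF p n m (s.1 ++ s.2) ∈
      Finset.range n ×ˢ Finset.range n ×ˢ Finset.range (m + 2 - k) := by
    intro s hs
    obtain ⟨_, _, h, hlen, hvlen⟩ := hfacts s hs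
    obtain ⟨f1, f2, f3, _, _⟩ := bad_facts hn0 hk hkn hlen hvlen h
    simp only [Finset.mem_product, Finset.mem_range]
    exact ⟨f1, f2, f3⟩
  rw [Finset.card_eq_sum_card_fiberwise hmap]
  apply Finset.sum_le_sum
  intro c hc
  -- bound each fiber
  have hinj : ((BadS w C L m).filter fun s => clsF p n m (s.1 ++ s.2) = c).card
      ≤ (((T w C L c.2.2).sigma fun P => extF w C L (recov n m c P))).card := by
    apply Finset.card_le_card_of_injOn
      (fun s => ⟨(s.1 ++ s.2).take (c.2.2 * n), s.2⟩)
    · intro s hs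
      rw [Finset.mem_coe, Finset.mem_filter] at hs
      obtain ⟨hsB, hscls⟩ := hs
      obtain ⟨hsT, hsE, h, hlen, hvlen⟩ := hfacts s hsB
      obtain ⟨_, _, _, f4, f5⟩ := bad_facts hn0 hk hkn hlen hvlen h
      rw [hscls] at f4 f5
      simp only [Finset.mem_coe, Finset.mem_sigma]
      constructor
      · have htake : (s.1 ++ s.2).take (c.2.2 * n) = s.1.take (c.2.2 * n) :=
          take_append_left (by rw [hlen]; exact Nat.mul_le_mul_right _ f4)
        rw [htake]
        exact mem_T_take hI hsT c.2.2 f4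
      · rw [f5]
        exact hsE
    · intro s hs t ht heq
      rw [Finset.mem_coe, Finset.mem_filter] at hs ht
      obtain ⟨hsB, hscls⟩ := hs
      obtain ⟨htB, htcls⟩ := ht
      obtain ⟨hsT, hsE, h, hlen, hvlen⟩ := hfacts s hsB
      obtain ⟨_, _, _, _, f5⟩ := bad_facts hn0 hk hkn hlen hvlen h
      obtain ⟨htT, htE, h', hlen', hvlen'⟩ := hfacts t htB
      obtain ⟨_, _, _, _, f5'⟩ := bad_facts hn0 hk hkn hlen' hvlen' h'
      rw [hscls] at f5
      rw [htcls] at f5'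
      have h1 : (s.1 ++ s.2).take (c.2.2 * n) = (t.1 ++ t.2).take (c.2.2 * n) := by
        have := congrArg Sigma.fst heq
        simpa using this
      have h2 : s.2 = t.2 := by
        have := congrArg Sigma.snd heq
        simpa using this
      have h3 : s.1 = t.1 := by
        rw [← f5, ← f5', h1]
      exact Sigma.ext h3 (heq_of_eq h2)
  refine hinj.trans ?_
  rw [Finset.card_sigma]
  calc ∑ P ∈ T w C L c.2.2, (extF w C L (recov n m c P)).card
      ≤ ∑ _P ∈ T w C L c.2.2, C := Finset.sum_le_sum fun P _ => extF_card_le w C L _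
    _ = C * (T w C L c.2.2).card := by rw [Finset.sum_const, smul_eq_mul, Nat.mul_comm]

lemma sum_classes (n t : ℕ) (f : ℕ → ℕ) :
    ∑ c ∈ Finset.range n ×ˢ Finset.range n ×ˢ Finset.range t, f c.2.2
      = n * (n * ∑ j ∈ Finset.range t, f j) := by
  rw [Finset.sum_product]
  have inner : ∀ a : ℕ, ∑ c ∈ Finset.range n ×ˢ Finset.range t,
      f (a, c).2.2 = n * ∑ j ∈ Finset.range t, f j := by
    intro a
    rw [Finset.sum_product]
    simp [Finset.sum_const, smul_eq_mul]
  rw [Finset.sum_congr rfl fun a _ => inner a]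
  simp [Finset.sum_const, smul_eq_mul]

lemma T_card_pos {w : List (Option α)} {C : ℕ} {L : Set (List α)} {p k : ℕ}
    (hw : w ≠ []) (hI : [] ∈ L) (hII : ∀ u ∈ L, AvoidsSquaresLt p u)
    (hIII : ∀ u ∈ L,
      C ≤ Set.ncard {v : List α | v.length = w.length ∧ CompatFin v w ∧ u ++ v ∈ L})
    (hk : 2 ≤ k) (hkn : p = k * w.length)
    {x : ℝ} (hx0 : 0 < x) (hx1 : x < 1)
    (hIV : (x⁻¹ : ℝ) ≤ (C : ℝ) * (1 - x ^ (k - 1) * (w.length : ℝ) ^ 2 / (1 - x))) :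
    ∀ m : ℕ, 0 < (T w C L m).card := by
  set n := w.length with hn
  have hn0 : 0 < n := List.length_pos_iff.mpr hw
  set s : ℕ → ℝ := fun m => ((T w C L m).card : ℝ) with hs
  have hs0 : s 0 = 1 := by simp [hs, T]
  have hsnn : ∀ m, 0 ≤ s m := fun m => Nat.cast_nonneg _
  have hxm : ∀ m : ℕ, (0:ℝ) < x ^ m := fun m => pow_pos hx0 m
  have key : ∀ m : ℕ, ∀ j ≤ m, s j * x ^ j ≤ s m * x ^ m := by
    intro m
    induction m with
    | zero => intro j hj; interval_cases j; exact le_refl _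
    | succ m ih =>
      have hstep : s m * x ^ m ≤ s (m+1) * x ^ (m+1) := by
        -- main counting step
        have hcount := card_T_succ hI hIII m
        have hbad := BadS_card_le (C := C) hw hI hII hk hkn m
        rw [sum_classes n (m+2-k) (fun j => C * (T w C L j).card)] at hbad
        -- real versions
        have hcountR : s (m+1) + ((BadS w C L m).card : ℝ) = C * s m := by
          show ((T w C L (m+1)).card : ℝ) + ((BadS w C L m).card : ℝ) = C * ((T w C L m).card : ℝ)
          exact_mod_cast hcount
        have hbadR : ((BadS w C L m).card : ℝ)
            ≤ (n:ℝ) * ((n:ℝ) * ∑ j ∈ Finset.range (m + 2 - k), (C : ℝ) * s j) := by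
          calc ((BadS w C L m).card : ℝ)
              ≤ ((n * (n * ∑ j ∈ Finset.range (m + 2 - k), C * (T w C L j).card) : ℕ) : ℝ) := by
                exact_mod_cast hbad
            _ = (n:ℝ) * ((n:ℝ) * ∑ j ∈ Finset.range (m + 2 - k), (C : ℝ) * s j) := by
                push_cast; ring_nf
                rfl
        -- bound the sum
        have hsum : ∑ j ∈ Finset.range (m + 2 - k), (C : ℝ) * s j
            ≤ (C : ℝ) * (s m * (x ^ (k-1) / (1 - x))) := by
          rcases Nat.eq_zero_or_pos (m + 2 - k) with h0 | hpos
          · rw [h0]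
            simp only [Finset.range_zero, Finset.sum_empty]
            have h1x : (0:ℝ) < 1 - x := by linarith
            apply mul_nonneg (Nat.cast_nonneg C)
            exact mul_nonneg (hsnn m) (div_nonneg (pow_nonneg hx0.le _) h1x.le)
          · have hkm : k ≤ m + 1 := by omega
            set t := m + 2 - k with ht
            have hterm : ∀ j ∈ Finset.range t, (C:ℝ) * s j
                ≤ (C:ℝ) * (s m * x ^ (k-1) * x ^ (t - 1 - j)) := by
              intro j hj
              rw [Finset.mem_range] at hj
              have hjm : j ≤ m := by omega
              have h1 : s j * x ^ j ≤ s m * x ^ m := ih j hjm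
              have hexp : x ^ m = x ^ j * (x ^ (k-1) * x ^ (t-1-j)) := by
                rw [← pow_add, ← pow_add]
                congr 1
                omega
              have h2 : s j ≤ s m * x ^ (k-1) * x ^ (t-1-j) := by
                have := h1
                rw [hexp] at this
                have hxj := hxm j
                nlinarith [hxm j]
              have hC : (0:ℝ) ≤ C := Nat.cast_nonneg _
              nlinarith
            calc ∑ j ∈ Finset.range t, (C:ℝ) * s j
                ≤ ∑ j ∈ Finset.range t, (C:ℝ) * (s m * x ^ (k-1) * x ^ (t - 1 - j)) :=
                  Finset.sum_le_sum hterm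
              _ = (C:ℝ) * (s m * x ^ (k-1)) * ∑ j ∈ Finset.range t, x ^ (t - 1 - j) := by
                  rw [Finset.mul_sum]
                  exact Finset.sum_congr rfl fun j _ => by ring
              _ = (C:ℝ) * (s m * x ^ (k-1)) * ∑ j ∈ Finset.range t, x ^ j := by
                  congr 1
                  exact Finset.sum_range_reflect (fun j => x ^ j) t
              _ ≤ (C:ℝ) * (s m * x ^ (k-1)) * (1 / (1-x)) := by
                  apply mul_le_mul_of_nonneg_left
                  · have h1x : (0:ℝ) < 1 - x := by linarith
                    rw [le_div_iff₀ h1x]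
                    have hg := geom_sum_mul x t
                    have := hxm t
                    nlinarith
                  · have hC : (0:ℝ) ≤ C := Nat.cast_nonneg _
                    have hk1 : (0:ℝ) ≤ x ^ (k-1) := pow_nonneg hx0.le _
                    have := hsnn m
                    positivity
              _ = (C:ℝ) * (s m * (x ^ (k-1) / (1-x))) := by ring
        -- combine
        have hb2 : ((BadS w C L m).card : ℝ)
            ≤ (C:ℝ) * (x ^ (k-1) * (n:ℝ)^2 / (1-x)) * s m := by
          calc ((BadS w C L m).card : ℝ)
              ≤ (n:ℝ) * ((n:ℝ) * ((C : ℝ) * (s m * (x ^ (k-1) / (1 - x))))) := by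
                refine hbadR.trans ?_
                apply mul_le_mul_of_nonneg_left _ (Nat.cast_nonneg n)
                exact mul_le_mul_of_nonneg_left hsum (Nat.cast_nonneg n)
            _ = (C:ℝ) * (x ^ (k-1) * (n:ℝ)^2 / (1-x)) * s m := by ring
        have hfinal : x⁻¹ * s m ≤ s (m+1) := by
          have h3 : s (m+1) = (C:ℝ) * s m - ((BadS w C L m).card : ℝ) := by linarith
          rw [h3]
          have h4 : x⁻¹ * s m ≤ ((C : ℝ) * (1 - x ^ (k - 1) * (n : ℝ) ^ 2 / (1 - x))) * s m :=
            mul_le_mul_of_nonneg_right hIV (hsnn m)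
          nlinarith [hb2, hsnn m]
        have h5 : x⁻¹ * s m * x ^ (m+1) = s m * x ^ m := by
          rw [pow_succ]
          field_simp
        calc s m * x ^ m = x⁻¹ * s m * x ^ (m+1) := h5.symm
          _ ≤ s (m+1) * x ^ (m+1) := mul_le_mul_of_nonneg_right hfinal (le_of_lt (hxm (m+1)))
      intro j hj
      rcases Nat.lt_or_ge j (m+1) with h | h
      · exact (ih j (by omega)).trans hstep
      · have : j = m + 1 := by omega
        subst this
        exact le_refl _
  intro m
  by_contra h0
  push_neg at h0
  have : (T w C L m).card = 0 := by omega
  have h1 := key m 0 (Nat.zero_le m)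
  rw [hs0] at h1
  simp only [pow_zero, one_mul] at h1
  rw [hs] at h1
  simp only at h1
  rw [this] at h1
  simp at h1
  have := hxm m
  linarith

end SqProof

theorem squares_avoidable_forced_letters_singleton
    {α : Type*} [Fintype α] (w : List (Option α)) (hw : w ≠ [])
    (p : ℕ) (hp : 2 * w.length ≤ p) (hdvd : w.length ∣ p)
    (C : ℕ) (hC : 0 < C) (L : Set (List α))
    (hI : [] ∈ L)
    (hII : ∀ u ∈ L, AvoidsSquaresLt p u)
    (hIII : ∀ u ∈ L,
      C ≤ Set.ncard {v : List α | v.length = w.length ∧ CompatFin v w ∧ u ++ v ∈ L})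
    (hIV : ∃ x : ℝ, 0 < x ∧ x < 1 ∧
      (x⁻¹ : ℝ) ≤ (C : ℝ) * (1 - x ^ (p / w.length - 1) * (w.length : ℝ) ^ 2 / (1 - x))) :
    {v : List α | SqFree v ∧ CompatInf v (wOmega w)}.Infinite := by
  obtain ⟨x, hx0, hx1, hxIV⟩ := hIV
  have hn0 : 0 < w.length := List.length_pos_iff.mpr hw
  have hkn : p = (p / w.length) * w.length := (Nat.div_mul_cancel hdvd).symm
  have hk2 : 2 ≤ p / w.length := by
    have h2 : 2 * w.length ≤ (p / w.length) * w.length := by rw [← hkn]; exact hp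
    exact Nat.le_of_mul_le_mul_right h2 hn0
  have hpos := SqProof.T_card_pos hw hI hII hIII hk2 hkn hx0 hx1 hxIV
  have hne : ∀ m, ∃ u, u ∈ SqProof.T w C L m := by
    intro m
    obtain ⟨u, hu⟩ := Finset.card_pos.mp (hpos m)
    exact ⟨u, hu⟩
  choose f hf using hne
  apply Set.infinite_of_injective_forall_mem (f := f)
  · intro m₁ m₂ h
    have l1 := (SqProof.mem_T hI (hf m₁)).1
    have l2 := (SqProof.mem_T hI (hf m₂)).1
    rw [h, l2] at l1
    exact (Nat.eq_of_mul_eq_mul_right hn0 l1).symm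
  · intro m
    obtain ⟨_, hsf, _, hci⟩ := SqProof.mem_T hI (hf m)
    exact ⟨hsf, hci⟩
end

section
/- Let Σ be a finite alphabet, let p ≥ 2 be an integer, let W be a set of finite partial words over Σ, let f : ℕ_{>0} → ℕ_{>0}, let G(V,A) = R_p(Σ) be the Rauzy graph of length 2p−3 of the square-free words over Σ, and let X ⊆ V be a nonempty set such that for all v ∈ X and all w ∈ W, p_{|w|,w,G[X]}(v) ≥ f(|w|). Then there exists a language L of finite words over Σ such that: the empty word belongs to L; every u ∈ L avoids squares of period less than p; and for every u ∈ L and every w ∈ W there are at least f(|w|) different words v ∈ Σ^{|w|} compatible with w such that uv ∈ L. -/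
/-- The arcs of the induced subgraph `G[X]`. -/
def inducedArcs {α : Type*} (A : Set (List α × List α × α)) (X : Set (List α)) :
    Set (List α × List α × α) :=
  {t | t ∈ A ∧ t.1 ∈ X ∧ t.2.1 ∈ X}

/-- The vertices of `R_p(α)`, the Rauzy graph of length `2p-3` of square-free words. -/
def rauzyVertices (α : Type*) (p : ℕ) : Set (List α) :=
  {u | SqFree u ∧ u.length = 2 * p - 3}

/-- The arcs of `R_p(α)`: `(au, ub, b)` for square-free words `aub` of length `2p-2`. -/
def rauzyArcs (α : Type*) (p : ℕ) : Set (List α × List α × α) :=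
  {t | ∃ (a b : α) (u : List α), SqFree (a :: (u ++ [b])) ∧ u.length = 2 * p - 4 ∧
    t = (a :: u, u ++ [b], b)}

/-- The walk counts `p_{i,w,G}(v)`: number of walks of length `i` starting from `v`
compatible with the last `i` letters of the partial word `w`. -/
noncomputable def walkCount {α : Type*} (A : Set (List α × List α × α))
    (w : List (Option α)) : ℕ → List α → ℕ
  | 0, _ => 1
  | i + 1, v =>
    ∑ᶠ (u : List α), ∑ᶠ (a : α),
      ∑ᶠ (_ : (v, u, a) ∈ A ∧ ∀ b : α, w[w.length - (i + 1)]? = some (some b) → a = b),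
        walkCount A w i u

section Aux

variable {α : Type*} [Fintype α]

open Classical in
/-- Words readable along walks in `A` starting at `v` (deterministic successor `v.tail ++ [a]`). -/
noncomputable def allW (A : Set (List α × List α × α)) : ℕ → List α → Finset (List α)
  | 0, _ => {[]}
  | i + 1, v =>
    Finset.univ.biUnion fun a : α =>
      if (v, v.tail ++ [a], a) ∈ A then
        (allW A i (v.tail ++ [a])).image (a :: ·)
      else ∅

open Classical in
/-- Words readable along walks compatible with the last `i` letters of `w`. -/
noncomputable def labs (A : Set (List α × List α × α)) (w : List (Option α)) :
    ℕ → List α → Finset (List α)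
  | 0, _ => {[]}
  | i + 1, v =>
    Finset.univ.biUnion fun a : α =>
      if ((v, v.tail ++ [a], a) ∈ A ∧
          ∀ b : α, w[w.length - (i + 1)]? = some (some b) → a = b) then
        (labs A w i (v.tail ++ [a])).image (a :: ·)
      else ∅

lemma mem_allW_succ_iff {A : Set (List α × List α × α)} {i : ℕ} {v s : List α} :
    s ∈ allW A (i + 1) v ↔
      ∃ a : α, ∃ s' : List α, (v, v.tail ++ [a], a) ∈ A ∧
        s' ∈ allW A i (v.tail ++ [a]) ∧ s = a :: s' := by
  classical
  constructor
  · intro hs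
    rw [allW] at hs
    simp only [Finset.mem_biUnion, Finset.mem_univ, true_and] at hs
    obtain ⟨a, ha⟩ := hs
    by_cases hc : (v, v.tail ++ [a], a) ∈ A
    · rw [if_pos hc] at ha
      simp only [Finset.mem_image] at ha
      obtain ⟨s', hs', rfl⟩ := ha
      exact ⟨a, s', hc, hs', rfl⟩
    · rw [if_neg hc] at ha; simp at ha
  · rintro ⟨a, s', hc, hs', rfl⟩
    rw [allW]
    simp only [Finset.mem_biUnion, Finset.mem_univ, true_and]
    exact ⟨a, by rw [if_pos hc]; exact Finset.mem_image_of_mem _ hs'⟩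

lemma mem_labs_succ_iff {A : Set (List α × List α × α)} {w : List (Option α)} {i : ℕ}
    {v s : List α} :
    s ∈ labs A w (i + 1) v ↔
      ∃ a : α, ∃ s' : List α,
        ((v, v.tail ++ [a], a) ∈ A ∧
          ∀ b : α, w[w.length - (i + 1)]? = some (some b) → a = b) ∧
        s' ∈ labs A w i (v.tail ++ [a]) ∧ s = a :: s' := by
  classical
  constructor
  · intro hs
    rw [labs] at hs
    simp only [Finset.mem_biUnion, Finset.mem_univ, true_and] at hs
    obtain ⟨a, ha⟩ := hs
    by_cases hc : ((v, v.tail ++ [a], a) ∈ A ∧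
        ∀ b : α, w[w.length - (i + 1)]? = some (some b) → a = b)
    · rw [if_pos hc] at ha
      simp only [Finset.mem_image] at ha
      obtain ⟨s', hs', rfl⟩ := ha
      exact ⟨a, s', hc, hs', rfl⟩
    · rw [if_neg hc] at ha; simp at ha
  · rintro ⟨a, s', hc, hs', rfl⟩
    rw [labs]
    simp only [Finset.mem_biUnion, Finset.mem_univ, true_and]
    exact ⟨a, by rw [if_pos hc]; exact Finset.mem_image_of_mem _ hs'⟩

lemma allW_length {A : Set (List α × List α × α)} :
    ∀ (i : ℕ) (v s : List α), s ∈ allW A i v → s.length = i := by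
  intro i
  induction i with
  | zero => intro v s hs; rw [allW] at hs; simp_all
  | succ i ih =>
    intro v s hs
    rw [mem_allW_succ_iff] at hs
    obtain ⟨a, s', _, hs', rfl⟩ := hs
    simp [ih _ _ hs']

lemma labs_subset_allW {A : Set (List α × List α × α)} {w : List (Option α)} :
    ∀ (i : ℕ) (v s : List α), s ∈ labs A w i v → s ∈ allW A i v := by
  intro i
  induction i with
  | zero => intro v s hs; rw [labs] at hs; rw [allW]; simp_all
  | succ i ih =>
    intro v s hs
    rw [mem_labs_succ_iff] at hs
    obtain ⟨a, s', hc, hs', rfl⟩ := hs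
    exact mem_allW_succ_iff.mpr ⟨a, s', hc.1, ih _ _ hs', rfl⟩

lemma walkCount_eq_card {A : Set (List α × List α × α)}
    (hdet : ∀ v u : List α, ∀ a : α, (v, u, a) ∈ A → u = v.tail ++ [a])
    (w : List (Option α)) :
    ∀ (i : ℕ) (v : List α), walkCount A w i v = (labs A w i v).card := by
  classical
  intro i
  induction i with
  | zero => intro v; rw [walkCount, labs]; simp
  | succ i ih =>
    intro v
    have cons_inj : ∀ a : α, Function.Injective (a :: · : List α → List α) := by
      intro a x y hxy; simpa using hxy
    have hL : walkCount A w (i + 1) v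
        = ∑ a : α, if ((v, v.tail ++ [a], a) ∈ A ∧
            ∀ b : α, w[w.length - (i + 1)]? = some (some b) → a = b)
          then walkCount A w i (v.tail ++ [a]) else 0 := by
      rw [walkCount]
      have h1 : ∀ u : List α,
          (∑ᶠ (a : α), ∑ᶠ (_ : (v, u, a) ∈ A ∧
              ∀ b : α, w[w.length - (i + 1)]? = some (some b) → a = b), walkCount A w i u)
          = ∑ a : α, if ((v, u, a) ∈ A ∧
              ∀ b : α, w[w.length - (i + 1)]? = some (some b) → a = b)
            then walkCount A w i u else 0 := by
        intro u
        rw [finsum_eq_sum_of_fintype]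
        refine Finset.sum_congr rfl fun a _ => ?_
        rw [finsum_eq_if]
      simp only [h1]
      have h2 : (∑ᶠ (u : List α), ∑ a : α, if ((v, u, a) ∈ A ∧
              ∀ b : α, w[w.length - (i + 1)]? = some (some b) → a = b)
            then walkCount A w i u else 0)
          = ∑ u ∈ Finset.univ.image (fun a : α => v.tail ++ [a]),
              ∑ a : α, if ((v, u, a) ∈ A ∧
                ∀ b : α, w[w.length - (i + 1)]? = some (some b) → a = b)
              then walkCount A w i u else 0 := by
        apply finsum_eq_finset_sum_of_support_subset
        intro u hu
        simp only [Function.mem_support] at hu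
        obtain ⟨a, -, ha⟩ := Finset.exists_ne_zero_of_sum_ne_zero hu
        by_cases hc : ((v, u, a) ∈ A ∧
            ∀ b : α, w[w.length - (i + 1)]? = some (some b) → a = b)
        · have := hdet v u a hc.1
          simp only [Finset.coe_image, Set.mem_image, Finset.mem_coe]
          exact ⟨a, by simp, this.symm⟩
        · rw [if_neg hc] at ha; exact absurd rfl ha
      rw [h2]
      rw [Finset.sum_image (by
        intro x _ y _ hxy
        have : [x] = [y] := List.append_cancel_left hxy
        simpa using this)]
      refine Finset.sum_congr rfl fun a _ => ?_
      rw [Finset.sum_eq_single a]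
      · intro b _ hba
        rw [if_neg]
        rintro ⟨hmem, -⟩
        have := hdet v (v.tail ++ [a]) b hmem
        have : [a] = [b] := List.append_cancel_left this
        simp_all
      · intro habs; exact absurd (Finset.mem_univ a) habs
    rw [hL, labs]
    rw [Finset.card_biUnion (by
      intro a _ b _ hab
      simp only [Function.onFun]; rw [Finset.disjoint_left]
      intro x hxa hxb
      split at hxa
      · simp only [Finset.mem_image] at hxa
        obtain ⟨xa, -, rfl⟩ := hxa
        split at hxb
        · simp only [Finset.mem_image] at hxb
          obtain ⟨xb, -, hxb⟩ := hxb
          exact hab (by injection hxb.symm)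
        · simp at hxb
      · simp at hxa)]
    refine Finset.sum_congr rfl fun a _ => ?_
    split
    · rw [Finset.card_image_of_injective _ (cons_inj a), ih]
    · simp

lemma labs_compat {A : Set (List α × List α × α)} {w : List (Option α)} :
    ∀ (i : ℕ), i ≤ w.length → ∀ (v s : List α), s ∈ labs A w i v →
      ∀ (j : ℕ) (b : α), w[(w.length - i) + j]? = some (some b) → s[j]? = some b := by
  intro i
  induction i with
  | zero =>
    intro _ v s hs j b hw
    exfalso
    have : w[(w.length - 0) + j]? = none := by
      apply List.getElem?_eq_none
      omega
    rw [this] at hw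
    cases hw
  | succ i ih =>
    intro hi v s hs j b hw
    rw [mem_labs_succ_iff] at hs
    obtain ⟨a, s', ⟨hmem, hcond⟩, hs', rfl⟩ := hs
    cases j with
    | zero =>
      have : w[w.length - (i + 1)]? = some (some b) := by simpa using hw
      have := hcond b this
      simp [this]
    | succ j =>
      have hidx : (w.length - (i + 1)) + (j + 1) = (w.length - i) + j := by omega
      rw [hidx] at hw
      have := ih (by omega) _ _ hs' j b hw
      simpa using this

/-- Endpoint of the walk reading `s` starting from `v`. -/
def endpt (v s : List α) : List α := s.foldl (fun v a => v.tail ++ [a]) v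

lemma allW_append {A : Set (List α × List α × α)} (s : List α) :
    ∀ (u v : List α) (k : ℕ), u ∈ allW A u.length v → s ∈ allW A k (endpt v u) →
      u ++ s ∈ allW A (u.length + k) v := by
  intro u
  induction u with
  | nil => intro v k _ hs; simpa [endpt] using hs
  | cons a u' ih =>
    intro v k hu hs
    rw [List.length_cons, mem_allW_succ_iff] at hu
    obtain ⟨b, s', harc, hs', heq⟩ := hu
    obtain ⟨rfl, rfl⟩ : a = b ∧ u' = s' := by
      constructor <;> injection heq
    have hstep : endpt v (a :: u') = endpt (v.tail ++ [a]) u' := rfl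
    rw [hstep] at hs
    have hres := ih (v.tail ++ [a]) k hs' hs
    have hlen : (a :: u').length + k = (u'.length + k) + 1 := by
      simp [List.length_cons]; omega
    rw [hlen, mem_allW_succ_iff]
    exact ⟨a, u' ++ s, harc, hres, rfl⟩

lemma endpt_mem {A : Set (List α × List α × α)} {X : Set (List α)}
    (hA : ∀ v u : List α, ∀ a : α, (v, u, a) ∈ A → u ∈ X) :
    ∀ (u v : List α), v ∈ X → u ∈ allW A u.length v → endpt v u ∈ X := by
  intro u
  induction u with
  | nil => intro v hv _; exact hv
  | cons a u' ih =>
    intro v hv hu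
    rw [List.length_cons, mem_allW_succ_iff] at hu
    obtain ⟨b, s', harc, hs', heq⟩ := hu
    obtain ⟨rfl, rfl⟩ : a = b ∧ u' = s' := by
      constructor <;> injection heq
    have hstep : endpt v (a :: u') = endpt (v.tail ++ [a]) u' := rfl
    rw [hstep]
    exact ih (v.tail ++ [a]) (hA v (v.tail ++ [a]) a harc) hs'

lemma rauzy_arc_facts {p : ℕ} {X : Set (List α)} {v u : List α} {a : α}
    (h : (v, u, a) ∈ inducedArcs (rauzyArcs α p) X) :
    SqFree (v ++ [a]) ∧ u = v.tail ++ [a] ∧ v.length = 2 * p - 4 + 1 ∧ u ∈ X := by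
  obtain ⟨⟨a', b, t, hsq, hlen, heq⟩, -, hu⟩ := h
  have hv : v = a' :: t := congrArg Prod.fst heq
  have hu' : u = t ++ [b] := congrArg (fun x => x.2.1) heq
  have hab : a = b := congrArg (fun x => x.2.2) heq
  subst hv hu' hab
  refine ⟨by simpa using hsq, rfl, by simp [hlen], hu⟩

lemma avoid_aux {p : ℕ} (hp : 2 ≤ p) {X : Set (List α)} (hX : X ⊆ rauzyVertices α p) :
    ∀ (n : ℕ) (v s : List α), v ∈ X →
      s ∈ allW (inducedArcs (rauzyArcs α p) X) n v → AvoidsSquaresLt p (v ++ s) := by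
  intro n
  induction n with
  | zero =>
    intro v s hv hs
    rw [allW] at hs
    simp only [Finset.mem_singleton] at hs
    subst hs
    intro r hr _ hinf
    exact (hX hv).1 r hr (by simpa using hinf)
  | succ n ih =>
    intro v s hv hs
    rw [mem_allW_succ_iff] at hs
    obtain ⟨a, s', harc, hs', rfl⟩ := hs
    obtain ⟨hsq, -, hvlen, htgt⟩ := rauzy_arc_facts harc
    have hIH := ih (v.tail ++ [a]) s' htgt hs'
    obtain ⟨c, t, rfl⟩ : ∃ c t, v = c :: t := by
      cases v with
      | nil => simp at hvlen
      | cons c t => exact ⟨c, t, rfl⟩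
    have htlen : t.length = 2 * p - 4 := by
      simpa using hvlen
    intro r hr hrlen hinf
    have hform : (c :: t) ++ a :: s' = c :: ((t ++ [a]) ++ s') := by simp
    rw [hform] at hinf
    rw [List.infix_cons_iff] at hinf
    rcases hinf with hpre | hinf
    · -- prefix case : r ++ r is a prefix of c :: (t ++ [a]) ++ s', and short
      have hlen2 : (r ++ r).length ≤ (c :: (t ++ [a])).length := by
        have e1 : (r ++ r).length = r.length + r.length := by simp
        have e2 : (c :: (t ++ [a])).length = t.length + 2 := by simp
        omega
      have hsplit : c :: ((t ++ [a]) ++ s') = (c :: (t ++ [a])) ++ s' := by simp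
      rw [hsplit] at hpre
      have htake := List.prefix_iff_eq_take.mp hpre
      rw [List.take_append_of_le_length hlen2] at htake
      have hpre2 : (r ++ r) <+: (c :: (t ++ [a])) := by
        rw [htake]; exact List.take_prefix _ _
      have : SqFree (c :: (t ++ [a])) := by
        have : (c :: t) ++ [a] = c :: (t ++ [a]) := by simp
        rw [← this]; exact hsq
      exact this r hr hpre2.isInfix
    · exact hIH r hr hrlen hinf

lemma finite_length_eq (n : ℕ) : {l : List α | l.length = n}.Finite := by
  apply Set.Finite.subset (Set.finite_range (List.ofFn : (Fin n → α) → List α))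
  intro l hl
  simp only [Set.mem_setOf_eq] at hl
  subst hl
  exact ⟨l.get, List.ofFn_get l⟩

end Aux

theorem language_from_rauzy_subgraph
    {α : Type*} [Fintype α] (p : ℕ) (hp : 2 ≤ p)
    (W : Set (List (Option α))) (f : ℕ → ℕ) (hf : ∀ n : ℕ, 0 < n → 0 < f n)
    (X : Set (List α)) (hX : X ⊆ rauzyVertices α p) (hXne : X.Nonempty)
    (h : ∀ v ∈ X, ∀ w ∈ W,
      f w.length ≤ walkCount (inducedArcs (rauzyArcs α p) X) w w.length v) :
    ∃ L : Set (List α), [] ∈ L ∧ (∀ u ∈ L, AvoidsSquaresLt p u) ∧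
      ∀ u ∈ L, ∀ w ∈ W,
        f w.length ≤ Set.ncard {v : List α | v.length = w.length ∧ CompatFin v w ∧ u ++ v ∈ L} := by
  classical
  obtain ⟨v0, hv0⟩ := hXne
  set A : Set (List α × List α × α) := inducedArcs (rauzyArcs α p) X with hAdef
  have hdet : ∀ v u : List α, ∀ a : α, (v, u, a) ∈ A → u = v.tail ++ [a] :=
    fun v u a hm => (rauzy_arc_facts hm).2.1
  have hXarc : ∀ v u : List α, ∀ a : α, (v, u, a) ∈ A → u ∈ X :=
    fun v u a hm => (rauzy_arc_facts hm).2.2.2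
  refine ⟨{u : List α | u ∈ allW A u.length v0}, ?_, ?_, ?_⟩
  · show ([] : List α) ∈ allW A ([] : List α).length v0
    rw [List.length_nil, allW]
    simp
  · intro u hu
    have h2 := avoid_aux hp hX u.length v0 u hv0 hu
    intro r hr hrp hinf
    exact h2 r hr hrp (hinf.trans (List.suffix_append v0 u).isInfix)
  · intro u hu w hw
    have hv' : endpt v0 u ∈ X := endpt_mem hXarc u v0 hv0 hu
    have h1 := h _ hv' w hw
    rw [walkCount_eq_card hdet] at h1
    refine le_trans h1 ?_
    rw [← Set.ncard_coe_finset]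
    apply Set.ncard_le_ncard
    · intro s hs
      simp only [Finset.coe_sort_coe, Finset.mem_coe] at hs
      have hsall : s ∈ allW A w.length (endpt v0 u) := labs_subset_allW _ _ _ hs
      have hslen : s.length = w.length := allW_length _ _ _ hsall
      have hcomp := labs_compat w.length le_rfl (endpt v0 u) s hs
      refine ⟨hslen, ⟨hslen.le, ?_⟩, ?_⟩
      · intro j _ b hb
        apply hcomp j b
        simpa [Nat.sub_self] using hb
      · show u ++ s ∈ allW A (u ++ s).length v0
        have := allW_append s u v0 w.length hu (hslen ▸ hsall)
        have hlen2 : (u ++ s).length = u.length + w.length := by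
          rw [List.length_append, hslen]
        rw [hlen2]
        exact this
    · apply Set.Finite.subset (finite_length_eq w.length)
      intro l hl
      exact hl.1
end

section
/- Let Σ be a finite alphabet, let p ≥ 2 be an integer, let a ∈ Σ, and let v be a square-free word over Σ with |v| = 2p−3. If the word Ψ(v)a contains no square of period less than p, then the word va contains no square of period less than p (equivalently, va is square-free, since |va| = 2p−2). -/
/-- The defining property of `Ψ`: for every `i` with `⌈|s|/2⌉ + 1 ≤ i ≤ p - 1` there is
`k ∈ {0, …, |s| - i - 1}` with `s_{|s|-k} ≠ s_{|s|-k-i}` (positions 1-indexed). -/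
def PsiProp {α : Type*} (p : ℕ) (s : List α) : Prop :=
  ∀ i : ℕ, (s.length + 1) / 2 + 1 ≤ i → i ≤ p - 1 →
    ∃ k : ℕ, k + i + 1 ≤ s.length ∧ s[s.length - k - 1]? ≠ s[s.length - k - i - 1]?

/-- `Ψ(w)`: the shortest suffix of `w` satisfying `PsiProp p`, i.e. the suffix obtained by
dropping the largest possible number of initial letters. -/
noncomputable def psi {α : Type*} (p : ℕ) (w : List α) : List α :=
  w.drop (sSup {d : ℕ | PsiProp p (w.drop d)})

theorem extension_of_psi_squarefree
    {α : Type*} [Fintype α] (p : ℕ) (hp : 2 ≤ p) (a : α)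
    (v : List α) (hv : SqFree v) (hlen : v.length = 2 * p - 3)
    (h : AvoidsSquaresLt p (psi p v ++ [a])) :
    AvoidsSquaresLt p (v ++ [a]) := by
  intro u hu hup hinf
  have hul : 1 ≤ u.length := List.length_pos_iff.mpr hu
  -- step 1: the square must be a suffix of `v ++ [a]`
  have hsuf : (u ++ u) <:+ (v ++ [a]) := by
    obtain ⟨t1, t2, ht⟩ := hinf
    rcases t2.eq_nil_or_concat with rfl | ⟨t2', b, rfl⟩
    · exact ⟨t1, by simpa using ht⟩
    · exfalso
      apply hv u hu
      have ht' : (t1 ++ (u ++ u) ++ t2') ++ [b] = v ++ [a] := by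
        simpa [List.concat_eq_append] using ht
      exact ⟨t1, t2', (List.append_inj' ht' rfl).1⟩
  -- step 2 : psi satisfies PsiProp
  have h0 : PsiProp p (v.drop 0) := by
    intro i hi1 hi2
    exfalso
    rw [List.drop_zero] at hi1
    omega
  have hbdd : BddAbove {d : ℕ | PsiProp p (v.drop d)} := by
    refine ⟨v.length, fun d hd => ?_⟩
    by_contra hdd
    push_neg at hdd
    have hd' : PsiProp p (v.drop d) := hd
    rw [List.drop_eq_nil_of_le (le_of_lt hdd)] at hd'
    obtain ⟨k, hk, -⟩ := hd' (p - 1) (by simp only [List.length_nil]; omega) le_rfl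
    simp only [List.length_nil] at hk
    omega
  have hmem := Nat.sSup_mem ⟨0, h0⟩ hbdd
  set d := sSup {d : ℕ | PsiProp p (v.drop d)} with hd
  have hPsi : PsiProp p (v.drop d) := hmem
  have hpsidef : psi p v = v.drop d := rfl
  have hL : (v.drop d).length = v.length - d := List.length_drop
  by_cases hcase : 2 * u.length ≤ (v.drop d).length + 1
  · -- small square: it lies inside `psi p v ++ [a]`
    have hsub : (v.drop d) ++ [a] <:+ v ++ [a] := by
      obtain ⟨t, ht⟩ := List.drop_suffix d v
      exact ⟨t, by rw [← List.append_assoc, ht]⟩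
    have hs2 := List.suffix_of_suffix_length_le hsuf hsub
      (by simp only [List.length_append, List.length_singleton]; omega)
    exact h u hu hup (by rw [hpsidef]; exact hs2.isInfix)
  · push_neg at hcase
    obtain ⟨k, hk, hne⟩ := hPsi u.length (by omega) (by omega)
    set i := u.length with hi
    set L := (v.drop d).length with hLdef
    have e1 : (v.drop d)[L - k - 1]? = v[v.length - k - 1]? := by
      have heq : d + (L - k - 1) = v.length - k - 1 := by omega
      rw [List.getElem?_drop, heq]
    have e2 : (v.drop d)[L - k - i - 1]? = v[v.length - k - i - 1]? := by
      have heq : d + (L - k - i - 1) = v.length - k - i - 1 := by omega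
      rw [List.getElem?_drop, heq]
    rw [e1, e2] at hne
    obtain ⟨t, ht⟩ := hsuf
    have htlen : t.length + (i + i) = v.length + 1 := by
      have := congrArg List.length ht
      simpa using this
    set r := i - k - 2 with hr
    have key : ∀ m, m < i + i - 1 → v[t.length + m]? = (u ++ u)[m]? := by
      intro m hm
      have h1 : (v ++ [a])[t.length + m]? = v[t.length + m]? :=
        List.getElem?_append_left (by omega)
      rw [← h1, ← ht, List.getElem?_append_right (by omega)]
      congr 1
      omega
    have hn1 : v.length - k - i - 1 = t.length + r := by omega
    have hn2 : v.length - k - 1 = t.length + (i + r) := by omega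
    have g1 : v[v.length - k - i - 1]? = u[r]? := by
      rw [hn1, key r (by omega), List.getElem?_append_left (by omega)]
    have g2 : v[v.length - k - 1]? = u[r]? := by
      rw [hn2, key (i + r) (by omega), List.getElem?_append_right (by omega)]
      congr 1
      omega
    exact hne (g2.trans g1.symm)
end

section
/- Let Σ be a finite alphabet, let p ≥ 2 be a positive integer, let w be a finite partial word over Σ, let G(V,A) = R_p(Σ) be the Rauzy graph of length 2p−3 of the square-free words over Σ, and let X ⊆ Ψ(V). Let Ψ^{−1}(X) = {x ∈ V : Ψ(x) ∈ X}. Then for every v ∈ Ψ^{−1}(X), p_{|w|,w,G[Ψ^{−1}(X)]}(v) = p_{|w|,w,Ψ(G)[X]}(Ψ(v)). -/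
/-- The arc set of `Ψ(G)`: `{(Ψ(a), Ψ(b), c) : (a, b, c) ∈ A}`. -/
def psiArcs {α : Type*} (p : ℕ) (A : Set (List α × List α × α)) :
    Set (List α × List α × α) :=
  {t | ∃ s ∈ A, t = (psi p s.1, psi p s.2.1, s.2.2)}

/-! ### Auxiliary lemmas -/

section Aux

variable {α : Type*} {p : ℕ}

lemma sqFree_of_infix {u v : List α} (hu : SqFree u) (h : v <:+: u) : SqFree v :=
  fun t ht hinf => hu t ht (hinf.trans h)

lemma not_psiProp_nil (hp : 2 ≤ p) : ¬ PsiProp p ([] : List α) := by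
  intro h
  obtain ⟨k, hk, -⟩ := h 1 (by norm_num) (by omega)
  simp at hk

lemma psiProp_of_length (hp : 2 ≤ p) {s : List α} (h : 2 * p - 3 ≤ s.length) :
    PsiProp p s := by
  intro i h1 h2
  exfalso
  omega

lemma mem_psiSet_lt (hp : 2 ≤ p) {v : List α} {d : ℕ}
    (hd : PsiProp p (v.drop d)) : d < v.length := by
  by_contra hcon
  rw [List.drop_eq_nil_iff.mpr (by omega)] at hd
  exact not_psiProp_nil hp hd

lemma psiSet_bddAbove (hp : 2 ≤ p) (v : List α) :
    BddAbove {d : ℕ | PsiProp p (v.drop d)} :=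
  ⟨v.length, fun d hd => le_of_lt (mem_psiSet_lt hp hd)⟩

lemma psiProp_psi (hp : 2 ≤ p) {v : List α} (h0 : PsiProp p v) :
    PsiProp p (psi p v) := by
  have hne : {d : ℕ | PsiProp p (v.drop d)}.Nonempty := ⟨0, by simpa using h0⟩
  exact Nat.sSup_mem hne (psiSet_bddAbove hp v)

lemma psi_suffix (v : List α) : psi p v <:+ v := List.drop_suffix _ _

lemma psiProp_append {s : List α} (h : PsiProp p s) (b : α) :
    PsiProp p (s ++ [b]) := by
  intro i h1 h2
  rw [List.length_append, List.length_singleton] at h1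
  obtain ⟨k, hk, hne⟩ := h i (by omega) h2
  refine ⟨k + 1, by simp; omega, ?_⟩
  have e1 : (s ++ [b])[(s ++ [b]).length - (k+1) - 1]? = s[s.length - k - 1]? := by
    rw [List.length_append, List.length_singleton,
      show s.length + 1 - (k+1) - 1 = s.length - k - 1 by omega,
      List.getElem?_append_left (by omega)]
  have e2 : (s ++ [b])[(s ++ [b]).length - (k+1) - i - 1]? = s[s.length - k - i - 1]? := by
    rw [List.length_append, List.length_singleton,
      show s.length + 1 - (k+1) - i - 1 = s.length - k - i - 1 by omega,
      List.getElem?_append_left (by omega)]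
  rw [e1, e2]
  exact hne

lemma psi_drop (hp : 2 ≤ p) {v : List α} {d₀ : ℕ}
    (h : PsiProp p (v.drop d₀)) : psi p v = psi p (v.drop d₀) := by
  have hd₀len : d₀ < v.length := mem_psiSet_lt hp h
  set S : Set ℕ := {d | PsiProp p (v.drop d)} with hS
  set S' : Set ℕ := {d | PsiProp p ((v.drop d₀).drop d)} with hS'
  have hSne : S.Nonempty := ⟨d₀, h⟩
  have hS'ne : S'.Nonempty := ⟨0, by show PsiProp p ((v.drop d₀).drop 0); simpa using h⟩
  have hSbdd := psiSet_bddAbove hp v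
  have hS'bdd := psiSet_bddAbove hp (v.drop d₀)
  have hM : sSup S ∈ S := Nat.sSup_mem hSne hSbdd
  have hd₀M : d₀ ≤ sSup S := le_csSup hSbdd h
  have key : ∀ m : ℕ, m = sSup S → PsiProp p (v.drop m) := fun m hm => hm ▸ hM
  have h1 : sSup S - d₀ ∈ S' := by
    show PsiProp p ((v.drop d₀).drop (sSup S - d₀))
    rw [List.drop_drop]
    exact key _ (by omega)
  have hM' : sSup S' ∈ S' := Nat.sSup_mem hS'ne hS'bdd
  have key' : ∀ m : ℕ, m = sSup S' + d₀ → PsiProp p (v.drop m) := by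
    intro m hm
    have h' : PsiProp p ((v.drop d₀).drop (sSup S')) := hM'
    rw [List.drop_drop] at h'
    rw [hm, Nat.add_comm]
    exact h'
  have h2 : sSup S' + d₀ ∈ S := by
    show PsiProp p (v.drop (sSup S' + d₀))
    exact key' _ rfl
  have hle1 : sSup S - d₀ ≤ sSup S' := le_csSup hS'bdd h1
  have hle2 : sSup S' + d₀ ≤ sSup S := le_csSup hSbdd h2
  show v.drop (sSup S) = (v.drop d₀).drop (sSup S')
  rw [List.drop_drop]
  congr 1
  omega

lemma suffix_of_suffix_of_le {l₁ l₂ l₃ : List α} (h1 : l₁ <:+ l₃) (h2 : l₂ <:+ l₃)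
    (hle : l₁.length ≤ l₂.length) : l₁ <:+ l₂ := by
  rw [← List.reverse_prefix] at h1 h2 ⊢
  exact List.prefix_of_prefix_length_le h1 h2 (by simpa using hle)


lemma infix_concat_cases {u x : List α} {b : α} (h : u <:+: x ++ [b]) :
    u <:+: x ∨ u <:+ x ++ [b] := by
  obtain ⟨s, t, hst⟩ := h
  rcases t.eq_nil_or_concat with rfl | ⟨t', c, rfl⟩
  · right; exact ⟨s, by simpa using hst⟩
  · left
    rw [List.concat_eq_append] at hst
    have h2 : (s ++ u ++ t') ++ [c] = x ++ [b] := by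
      rw [← hst]; simp [List.append_assoc]
    obtain ⟨h3, -⟩ := List.append_inj' h2 rfl
    exact ⟨s, t', h3⟩

lemma psi_append_suffix (x : List α) (b : α) : psi p x ++ [b] <:+ x ++ [b] := by
  obtain ⟨t, ht⟩ := psi_suffix (p := p) x
  exact ⟨t, by rw [← List.append_assoc, ht]⟩

lemma sqfree_ext_iff (hp : 2 ≤ p) {x : List α} (hx : SqFree x)
    (hlen : x.length = 2 * p - 3) (b : α) :
    SqFree (x ++ [b]) ↔ SqFree (psi p x ++ [b]) := by
  have hψsuf : psi p x ++ [b] <:+ x ++ [b] := psi_append_suffix x b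
  constructor
  · intro h
    exact sqFree_of_infix h hψsuf.isInfix
  · intro hψ v hvne hinf
    rcases infix_concat_cases hinf with hin | hsuf
    · exact hx v hvne hin
    · set i := v.length with hi
      have hipos : 0 < i := List.length_pos_iff.mpr hvne
      have h2ile : 2 * i ≤ x.length + 1 := by
        have := hsuf.length_le
        simp only [List.length_append, List.length_singleton] at this
        omega
      set L := (psi p x).length with hL
      have hLle : L ≤ x.length := (psi_suffix x).length_le
      have hprop : PsiProp p (psi p x) := psiProp_psi hp (psiProp_of_length hp (by omega))
      by_cases hcase : 2 * i ≤ L + 1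
      · have hs2 : (v ++ v) <:+ psi p x ++ [b] := by
          refine suffix_of_suffix_of_le hsuf hψsuf ?_
          simp only [List.length_append, List.length_singleton]
          omega
        exact hψ v hvne hs2.isInfix
      · have hip : i ≤ p - 1 := by omega
        have hiL : (L + 1) / 2 + 1 ≤ i := by omega
        obtain ⟨k, hk, hne⟩ := hprop i hiL hip
        apply hne
        have hdef : psi p x = x.drop (x.length - (psi p x).length) :=
          List.suffix_iff_eq_drop.mp (psi_suffix x)
        have hget : ∀ t : ℕ, (psi p x)[t]? = x[(x.length - L) + t]? := by
          intro t
          conv_lhs => rw [hdef]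
          rw [List.getElem?_drop]
        rw [hget, hget,
          show x.length - L + (L - k - 1) = x.length - k - 1 by omega,
          show x.length - L + (L - k - i - 1) = x.length - k - i - 1 by omega]
        obtain ⟨r, hr⟩ := hsuf
        have hrlen : r.length + 2 * i = x.length + 1 := by
          have := congrArg List.length hr
          simp only [List.length_append, List.length_singleton] at this
          omega
        have hkt : k + 3 ≤ i := by omega
        set t0 := i - k - 2 with ht0
        have hx1 : x[x.length - k - i - 1]? = v[t0]? := by
          rw [show x[x.length - k - i - 1]? = (x ++ [b])[x.length - k - i - 1]? from
              (List.getElem?_append_left (by omega)).symm,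
            ← hr,
            show x.length - k - i - 1 = r.length + t0 by omega,
            List.getElem?_append_right (Nat.le_add_right _ _),
            Nat.add_sub_cancel_left,
            List.getElem?_append_left (by omega)]
        have hx2 : x[x.length - k - 1]? = v[t0]? := by
          rw [show x[x.length - k - 1]? = (x ++ [b])[x.length - k - 1]? from
              (List.getElem?_append_left (by omega)).symm,
            ← hr,
            show x.length - k - 1 = r.length + (i + t0) by omega,
            List.getElem?_append_right (Nat.le_add_right _ _),
            Nat.add_sub_cancel_left,
            List.getElem?_append_right (by omega),
            show i + t0 - v.length = t0 by omega]
        rw [hx2, hx1]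

lemma psi_tail_eq (hp : 2 ≤ p) {x y : List α} (hx : SqFree x) (hy : SqFree y)
    (hlx : x.length = 2 * p - 3) (hly : y.length = 2 * p - 3)
    (hψ : psi p x = psi p y) (b : α) :
    psi p (x.tail ++ [b]) = psi p (y.tail ++ [b]) := by
  have key : ∀ z : List α, z.length = 2 * p - 3 → (psi p z).length < z.length →
      psi p (z.tail ++ [b]) = psi p (psi p z ++ [b]) := by
    intro z hlz hLz
    have h0 : PsiProp p z := psiProp_of_length hp (by omega)
    have hprop : PsiProp p (psi p z ++ [b]) := psiProp_append (psiProp_psi hp h0) b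
    have hdef : psi p z = z.drop (z.length - (psi p z).length) :=
      List.suffix_iff_eq_drop.mp (psi_suffix z)
    set D := z.length - (psi p z).length with hD
    have hD1 : 1 ≤ D := by omega
    have heq : (z.tail ++ [b]).drop (D - 1) = psi p z ++ [b] := by
      rw [List.drop_append_of_le_length (by rw [List.length_tail]; omega), hdef]
      congr 1
      rw [← List.drop_one, List.drop_drop]
      congr 1
      omega
    have hres := psi_drop hp (d₀ := D - 1) (v := z.tail ++ [b]) (heq ▸ hprop)
    rw [hres, heq]
  by_cases hL : (psi p x).length = x.length
  · have hx' : psi p x = x := (psi_suffix x).eq_of_length hL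
    have hy' : psi p y = y := (psi_suffix y).eq_of_length (by rw [← hψ, hL, hlx, hly])
    have hxy : x = y := by rw [← hx', hψ, hy']
    rw [hxy]
  · have hLx : (psi p x).length < x.length :=
      lt_of_le_of_ne (psi_suffix x).length_le hL
    have hLy : (psi p y).length < y.length := by rw [← hψ]; omega
    rw [key x hlx hLx, key y hly hLy, hψ]

lemma succ_sqfree {v : List α} {b : α} (hvne : v ≠ []) (h : SqFree (v ++ [b])) :
    SqFree (v.tail ++ [b]) := by
  apply sqFree_of_infix h
  obtain ⟨hd, tl, rfl⟩ := List.exists_cons_of_ne_nil hvne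
  have he : (hd :: tl).tail ++ [b] = ((hd :: tl) ++ [b]).tail := by simp
  rw [he]
  exact (List.tail_suffix _).isInfix

lemma mem_rauzyArcs_iff (hp : 2 ≤ p) {v u : List α} {a : α}
    (hvl : v.length = 2 * p - 3) :
    (v, u, a) ∈ rauzyArcs α p ↔ SqFree (v ++ [a]) ∧ u = v.tail ++ [a] := by
  have hvne : v ≠ [] := by
    intro h
    rw [h] at hvl
    simp at hvl
    omega
  constructor
  · rintro ⟨a', b, u₀, hsq, hul, heq⟩
    simp only [Prod.mk.injEq] at heq
    obtain ⟨h1, h2, h3⟩ := heq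
    subst h3
    constructor
    · have he : v ++ [a] = a' :: (u₀ ++ [a]) := by rw [h1]; simp
      rw [he]
      exact hsq
    · rw [h2, h1]
      simp
  · rintro ⟨hsq, rfl⟩
    refine ⟨v.head hvne, a, v.tail, ?_, ?_, ?_⟩
    · have he : v.head hvne :: (v.tail ++ [a]) = v ++ [a] := by
        rw [← List.cons_append, List.cons_head_tail]
      rw [he]
      exact hsq
    · rw [List.length_tail, hvl]
      omega
    · rw [List.cons_head_tail]

end Aux

open scoped Classical in
lemma walkCount_succ {α : Type*} [Fintype α] (A : Set (List α × List α × α))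
    (w : List (Option α)) (i : ℕ) (v : List α) (T : α → List α)
    (hT : ∀ u a, (v, u, a) ∈ A → u = T a) :
    walkCount A w (i + 1) v = ∑ a : α,
      if ((v, T a, a) ∈ A ∧ ∀ b : α, w[w.length - (i + 1)]? = some (some b) → a = b)
      then walkCount A w i (T a) else 0 := by
  rw [walkCount]
  have hre : ∀ u : List α,
      (∑ᶠ (a : α), ∑ᶠ (_ : (v, u, a) ∈ A ∧
          ∀ b : α, w[w.length - (i + 1)]? = some (some b) → a = b), walkCount A w i u)
      = ∑ a : α, if ((v, u, a) ∈ A ∧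
          ∀ b : α, w[w.length - (i + 1)]? = some (some b) → a = b)
        then walkCount A w i u else 0 := by
    intro u
    rw [finsum_eq_sum_of_fintype]
    exact Finset.sum_congr rfl fun a _ => finsum_eq_if
  rw [finsum_congr hre]
  have hsupp : (Function.support fun u : List α => ∑ a : α,
      if ((v, u, a) ∈ A ∧ ∀ b : α, w[w.length - (i + 1)]? = some (some b) → a = b)
      then walkCount A w i u else 0) ⊆ ↑(Finset.univ.image T) := by
    intro u hu
    simp only [Function.mem_support] at hu
    by_contra hnot
    apply hu
    apply Finset.sum_eq_zero
    intro a _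
    rw [if_neg]
    rintro ⟨hA, -⟩
    exact hnot (by
      simp only [Finset.coe_image, Finset.coe_univ, Set.image_univ, Set.mem_range]
      exact ⟨a, (hT u a hA).symm⟩)
  rw [finsum_eq_finset_sum_of_support_subset _ hsupp, Finset.sum_comm]
  refine Finset.sum_congr rfl fun a _ => ?_
  refine Finset.sum_eq_single_of_mem (T a)
    (Finset.mem_image_of_mem T (Finset.mem_univ a)) ?_
  intro u _ hne
  exact if_neg fun hQ => hne (hT u a hQ.1)

theorem walkCount_psi_eq
    {α : Type*} [Fintype α] (p : ℕ) (hp : 2 ≤ p)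
    (w : List (Option α)) (X : Set (List α))
    (hX : X ⊆ psi p '' rauzyVertices α p) :
    ∀ v ∈ rauzyVertices α p, psi p v ∈ X →
      walkCount (inducedArcs (rauzyArcs α p) {y | y ∈ rauzyVertices α p ∧ psi p y ∈ X})
          w w.length v
        = walkCount (inducedArcs (psiArcs p (rauzyArcs α p)) X) w w.length (psi p v) := by
  suffices H : ∀ i : ℕ, ∀ v ∈ rauzyVertices α p, psi p v ∈ X →
      walkCount (inducedArcs (rauzyArcs α p) {y | y ∈ rauzyVertices α p ∧ psi p y ∈ X})
          w i v
        = walkCount (inducedArcs (psiArcs p (rauzyArcs α p)) X) w i (psi p v) by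
    exact fun v hv hvX => H w.length v hv hvX
  intro i
  induction i with
  | zero =>
    intro v _ _
    simp [walkCount]
  | succ i ih =>
    intro v hv hvX
    obtain ⟨hvsq, hvl⟩ := hv
    have hvne : v ≠ [] := by
      intro h
      rw [h] at hvl
      simp at hvl
      omega
    have hT₁ : ∀ u a,
        (v, u, a) ∈ inducedArcs (rauzyArcs α p)
          {y | y ∈ rauzyVertices α p ∧ psi p y ∈ X} →
        u = (fun a : α => v.tail ++ [a]) a := by
      rintro u a ⟨hA, -, -⟩
      exact ((mem_rauzyArcs_iff hp hvl).mp hA).2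
    have hT₂ : ∀ z a,
        (psi p v, z, a) ∈ inducedArcs (psiArcs p (rauzyArcs α p)) X →
        z = (fun a : α => psi p (v.tail ++ [a])) a := by
      rintro z a ⟨⟨s, hs, heq⟩, -, -⟩
      obtain ⟨a', b, u₀, hsq, hul, hseq⟩ := hs
      subst hseq
      simp only [Prod.mk.injEq] at heq
      obtain ⟨h1, h2, h3⟩ := heq
      subst h3
      have hs1sq : SqFree (a' :: u₀) := sqFree_of_infix hsq ⟨[], [a], by simp⟩
      have hs1len : (a' :: u₀).length = 2 * p - 3 := by
        simp only [List.length_cons, hul]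
        omega
      have hkey := psi_tail_eq hp hs1sq hvsq hs1len hvl h1.symm a
      simp only [List.tail_cons] at hkey
      rw [h2]
      exact hkey
    rw [walkCount_succ _ w i v _ hT₁, walkCount_succ _ w i (psi p v) _ hT₂]
    refine Finset.sum_congr rfl fun a _ => ?_
    have hmem₁ : (v, v.tail ++ [a], a) ∈ inducedArcs (rauzyArcs α p)
          {y | y ∈ rauzyVertices α p ∧ psi p y ∈ X} ↔
        (SqFree (v ++ [a]) ∧ psi p (v.tail ++ [a]) ∈ X) := by
      constructor
      · rintro ⟨hA, -, h2⟩
        exact ⟨((mem_rauzyArcs_iff hp hvl).mp hA).1, h2.2⟩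
      · rintro ⟨hsq, hXm⟩
        refine ⟨(mem_rauzyArcs_iff hp hvl).mpr ⟨hsq, rfl⟩, ⟨⟨hvsq, hvl⟩, hvX⟩,
          ⟨⟨succ_sqfree hvne hsq, ?_⟩, hXm⟩⟩
        rw [List.length_append, List.length_tail, hvl, List.length_singleton]
        omega
    have hmem₂ : (psi p v, psi p (v.tail ++ [a]), a) ∈
          inducedArcs (psiArcs p (rauzyArcs α p)) X ↔
        (SqFree (v ++ [a]) ∧ psi p (v.tail ++ [a]) ∈ X) := by
      constructor
      · rintro ⟨⟨s, hs, heq⟩, -, hX2⟩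
        refine ⟨?_, hX2⟩
        obtain ⟨a', b, u₀, hsq, hul, hseq⟩ := hs
        subst hseq
        simp only [Prod.mk.injEq] at heq
        obtain ⟨h1, -, h3⟩ := heq
        subst h3
        have hs1sq : SqFree (a' :: u₀) := sqFree_of_infix hsq ⟨[], [a], by simp⟩
        have hs1len : (a' :: u₀).length = 2 * p - 3 := by
          simp only [List.length_cons, hul]
          omega
        have hsq' : SqFree ((a' :: u₀) ++ [a]) := by simpa using hsq
        have h5 : SqFree (psi p (a' :: u₀) ++ [a]) :=
          (sqfree_ext_iff hp hs1sq hs1len a).mp hsq'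
        rw [← h1] at h5
        exact (sqfree_ext_iff hp hvsq hvl a).mpr h5
      · rintro ⟨hsq, hXm⟩
        exact ⟨⟨(v, v.tail ++ [a], a), (mem_rauzyArcs_iff hp hvl).mpr ⟨hsq, rfl⟩, rfl⟩,
          hvX, hXm⟩
    have hiff : ((v, v.tail ++ [a], a) ∈ inducedArcs (rauzyArcs α p)
          {y | y ∈ rauzyVertices α p ∧ psi p y ∈ X} ∧
        ∀ b : α, w[w.length - (i + 1)]? = some (some b) → a = b) ↔
        ((psi p v, psi p (v.tail ++ [a]), a) ∈
          inducedArcs (psiArcs p (rauzyArcs α p)) X ∧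
        ∀ b : α, w[w.length - (i + 1)]? = some (some b) → a = b) :=
      and_congr (hmem₁.trans hmem₂.symm) Iff.rfl
    by_cases h : (v, v.tail ++ [a], a) ∈ inducedArcs (rauzyArcs α p)
          {y | y ∈ rauzyVertices α p ∧ psi p y ∈ X} ∧
        ∀ b : α, w[w.length - (i + 1)]? = some (some b) → a = b
    · rw [if_pos h, if_pos (hiff.mp h)]
      have hsq : SqFree (v ++ [a]) := (hmem₁.mp h.1).1
      have hXm : psi p (v.tail ++ [a]) ∈ X := (hmem₁.mp h.1).2
      refine ih (v.tail ++ [a]) ⟨succ_sqfree hvne hsq, ?_⟩ hXm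
      rw [List.length_append, List.length_tail, hvl, List.length_singleton]
      omega
    · rw [if_neg h, if_neg fun hc => h (hiff.mpr hc)]
end

section
/- There is no infinite square-free word u = u_1 u_2 u_3 … over the three-letter alphabet {0,1,2} such that for every integer j ≥ 0, u_{6j+1} = j mod 3 (that is, no infinite square-free ternary word is compatible with the infinite partial word (0⋄⋄⋄⋄⋄1⋄⋄⋄⋄⋄2⋄⋄⋄⋄⋄)^ω). Consequently d({0,1,2}) ≥ 7. -/
/-- An infinite word `u` (positions indexed from 1) is square-free: it has no factor
`u_i … u_{i+n-1} u_{i+n} … u_{i+2n-1}` with the two halves equal. -/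
def SqFreeSeq {α : Type*} (u : ℕ → α) : Prop :=
  ∀ i n : ℕ, 1 ≤ i → 1 ≤ n → ∃ k, k < n ∧ u (i + k) ≠ u (i + n + k)

/-- Check that the word encoded in base 4 as `w` (latest letter = lowest digit) has no
square suffix, where `p` is the current length. -/
def chkSq (p w : ℕ) : Bool :=
  (List.range' 1 (p / 2)).all fun n => !(w % 4 ^ n == (w / 4 ^ n) % 4 ^ n)

/-- The constraint at position `p`. -/
def consOk (p a : ℕ) : Bool := decide (p % 6 = 1 → a = (p / 6) % 3)

def step (p w a : ℕ) (rest : ℕ → Bool) : Bool :=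
  consOk p a && chkSq p (w * 4 + a) && rest (w * 4 + a)

/-- DFS: is there a square-free, constraint-satisfying extension by `fuel` more letters
of the word `w` of length `m`? -/
def search : ℕ → ℕ → ℕ → Bool
  | 0, _, _ => true
  | fuel + 1, m, w =>
      step (m + 1) w 0 (search fuel (m + 1)) ||
      step (m + 1) w 1 (search fuel (m + 1)) ||
      step (m + 1) w 2 (search fuel (m + 1))

lemma digit_mod_pow (x n t : ℕ) (ht : t < n) :
    (x / 4 ^ t) % 4 = ((x % 4 ^ n) / 4 ^ t) % 4 := by
  conv_lhs => rw [← Nat.mod_add_div x (4 ^ n)]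
  have h4 : 4 ^ n = 4 ^ t * 4 ^ (n - t) := by
    rw [← pow_add]; congr 1; omega
  rw [h4, mul_assoc, Nat.add_mul_div_left _ _ (by positivity : 0 < 4 ^ t)]
  obtain ⟨d, hd⟩ : 4 ∣ 4 ^ (n - t) := dvd_pow_self 4 (by omega)
  rw [hd, mul_assoc, mul_comm 4 (d * _), Nat.add_mul_mod_self_right]

lemma bridge (u : ℕ → Fin 3) (hsf : SqFreeSeq u)
    (hc : ∀ j : ℕ, u (6 * j + 1) = ⟨j % 3, Nat.mod_lt j (Nat.succ_pos 2)⟩) :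
    ∀ fuel m w, (∀ t, t < m → (w / 4 ^ t) % 4 = (u (m - t)).val) →
      search fuel m w = true := by
  intro fuel
  induction fuel with
  | zero => intro m w _; rfl
  | succ fuel ih =>
    intro m w hw
    set a : ℕ := (u (m + 1)).val with ha
    set w' : ℕ := w * 4 + a with hw'
    have haval : a < 3 := (u (m + 1)).isLt
    -- digits of w'
    have hdig : ∀ t, t < m + 1 → (w' / 4 ^ t) % 4 = (u (m + 1 - t)).val := by
      intro t ht
      cases t with
      | zero =>
        simp only [pow_zero, Nat.div_one, Nat.sub_zero, hw']
        omega
      | succ s =>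
        have h0 : w' / 4 = w := by omega
        have h1 : w' / 4 ^ (s + 1) = w / 4 ^ s := by
          rw [pow_succ', ← Nat.div_div_eq_div_mul, h0]
        have h2 : m + 1 - (s + 1) = m - s := by omega
        rw [h1, h2, hw s (by omega)]
    -- the three conjuncts for letter a
    have hcons : consOk (m + 1) a = true := by
      apply decide_eq_true
      intro h
      have hj : 6 * ((m + 1) / 6) + 1 = m + 1 := by omega
      have := hc ((m + 1) / 6)
      rw [hj] at this
      rw [ha, this]
    have hchk : chkSq (m + 1) w' = true := by
      rw [chkSq, List.all_eq_true]
      intro n hn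
      rw [List.mem_range'_1] at hn
      have hn1 : 1 ≤ n := hn.1
      have hn2 : 2 * n ≤ m + 1 := by omega
      rw [Bool.not_eq_true']
      apply beq_false_of_ne
      intro heq
      -- digits t and n+t of w' agree for t < n
      obtain ⟨k, hk, hne⟩ := hsf (m + 2 - 2 * n) n (by omega) hn1
      apply hne
      set t : ℕ := n - 1 - k with htdef
      have h1 : (w' / 4 ^ t) % 4 = ((w' / 4 ^ n) / 4 ^ t) % 4 := by
        rw [digit_mod_pow w' n t (by omega), heq,
          ← digit_mod_pow (w' / 4 ^ n) n t (by omega)]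
      have h2 : (w' / 4 ^ n) / 4 ^ t = w' / 4 ^ (n + t) := by
        rw [Nat.div_div_eq_div_mul, ← pow_add]
      rw [h2] at h1
      have d1 := hdig t (by omega)
      have d2 := hdig (n + t) (by omega)
      rw [d1, d2] at h1
      have e1 : m + 1 - t = m + 2 - 2 * n + n + k := by omega
      have e2 : m + 1 - (n + t) = m + 2 - 2 * n + k := by omega
      rw [e1, e2] at h1
      exact Fin.val_injective h1.symm
    have hrest : search fuel (m + 1) w' = true := ih (m + 1) w' hdig
    have hstep : step (m + 1) w a (search fuel (m + 1)) = true := by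
      simp only [step, ← hw', hcons, hchk, hrest, Bool.and_self]
    have h3 : a = 0 ∨ a = 1 ∨ a = 2 := by omega
    rw [search]
    rcases h3 with h|h|h <;> rw [h] at hstep <;> simp [hstep]

set_option maxRecDepth 100000 in
set_option maxHeartbeats 4000000 in
theorem no_squarefree_ternary_period_6 :
    ¬ ∃ u : ℕ → Fin 3, SqFreeSeq u ∧
        ∀ j : ℕ, u (6 * j + 1) = ⟨j % 3, by omega⟩ := by
  rintro ⟨u, hsf, hc⟩
  have h := bridge u hsf hc 105 0 0 (fun t ht => absurd ht (Nat.not_lt_zero t))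
  have h2 : search 105 0 0 = false := by decide
  rw [h] at h2
  simp at h2
end

section
/- There is no infinite square-free word u = u_1 u_2 u_3 … over the four-letter alphabet {0,1,2,3} such that for every integer j ≥ 0, u_{2j+1} = j mod 4 (that is, no infinite square-free word over {0,1,2,3} is compatible with the infinite partial word (0⋄1⋄2⋄3⋄)^ω). Consequently d({0,1,2,3}) ≥ 3. -/
/-- Letters allowed at position `p` (1-indexed): odd positions are forced. -/
def nextLetters (p : ℕ) : List (Fin 4) :=
  if p % 2 = 1 then [⟨p / 2 % 4, Nat.mod_lt _ (by norm_num)⟩] else [0, 1, 2, 3]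

/-- Whether the word (most recent letter first) has a square ending at its start. -/
def hasNewSq (w : List (Fin 4)) : Bool :=
  (List.range (w.length / 2)).any fun n =>
    w.take (n+1) == (w.drop (n+1)).take (n+1)

/-- DFS: can `w` be extended by `f` letters, each allowed and creating no square? -/
def reach : ℕ → List (Fin 4) → Bool
  | 0, _ => true
  | f+1, w => (nextLetters (w.length + 1)).any fun v =>
      !hasNewSq (v :: w) && reach f (v :: w)

set_option maxRecDepth 100000 in
lemma reach_false : reach 39 [] = false := by decide

/-- The reversed prefix of `u` of length `m`. -/
def W (u : ℕ → Fin 4) : ℕ → List (Fin 4)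
  | 0 => []
  | m+1 => u (m+1) :: W u m

lemma W_length (u : ℕ → Fin 4) : ∀ m, (W u m).length = m
  | 0 => rfl
  | m+1 => by simp [W, W_length u m]

lemma W_get? (u : ℕ → Fin 4) : ∀ m q, q < m → (W u m)[q]? = some (u (m - q))
  | 0, q, h => by omega
  | m+1, 0, h => rfl
  | m+1, q+1, h => by
    show (W u m)[q]? = _
    rw [W_get? u m q (by omega)]
    congr 2
    omega

lemma hasNewSq_false (u : ℕ → Fin 4) (hsf : SqFreeSeq u) (m : ℕ) :
    hasNewSq (W u (m+1)) = false := by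
  by_contra h
  rw [Bool.not_eq_false, hasNewSq, List.any_eq_true] at h
  obtain ⟨n, hn, heq⟩ := h
  rw [List.mem_range, W_length] at hn
  rw [beq_iff_eq] at heq
  set N := n + 1 with hN
  have h2N : 2 * N ≤ m + 1 := by omega
  have key : ∀ k, k < N → u (m + 1 - k) = u (m + 1 - (N + k)) := by
    intro k hk
    have := congrArg (fun l : List (Fin 4) => l[k]?) heq
    rw [List.getElem?_take_of_lt hk, List.getElem?_take_of_lt hk, List.getElem?_drop] at this
    rw [W_get? u (m+1) k (by omega), W_get? u (m+1) (N + k) (by omega)] at this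
    exact Option.some.inj this
  obtain ⟨k, hk, hne⟩ := hsf (m + 2 - 2 * N) N (by omega) (by omega)
  apply hne
  have h1 : m + 2 - 2 * N + k = m + 1 - (N + (N - 1 - k)) := by omega
  have h2 : m + 2 - 2 * N + N + k = m + 1 - (N - 1 - k) := by omega
  rw [h1, h2]
  exact (key (N - 1 - k) (by omega)).symm

theorem no_squarefree_quaternary_period_2 :
    ¬ ∃ u : ℕ → Fin 4, SqFreeSeq u ∧
        ∀ j : ℕ, u (2 * j + 1) = ⟨j % 4, by omega⟩ := by
  rintro ⟨u, hsf, hper⟩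
  have key : ∀ f m, reach f (W u m) = true := by
    intro f
    induction f with
    | zero => intro m; rfl
    | succ f ih =>
      intro m
      rw [reach, List.any_eq_true]
      refine ⟨u (m+1), ?_, ?_⟩
      · rw [W_length, nextLetters]
        rcases Nat.even_or_odd m with ⟨j, hj⟩ | ⟨j, hj⟩
        · have h1 : (m + 1) % 2 = 1 := by omega
          rw [if_pos h1]
          have h3 : m + 1 = 2 * j + 1 := by omega
          rw [h3, hper j]
          refine List.mem_singleton.mpr (Fin.ext ?_)
          show j % 4 = (2 * j + 1) / 2 % 4
          omega
        · have h1 : ¬ (m + 1) % 2 = 1 := by omega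
          rw [if_neg h1]
          have h4 : ∀ v : Fin 4, v ∈ ([0,1,2,3] : List (Fin 4)) := by decide
          exact h4 _
      · rw [Bool.and_eq_true, Bool.not_eq_true']
        exact ⟨hasNewSq_false u hsf m, ih (m+1)⟩
  have := key 39 0
  rw [show W u 0 = [] from rfl, reach_false] at this
  exact Bool.false_ne_true this
end

section
/- Let k ≥ 2 be an integer and let Σ ⊆ Σ' be finite alphabets. Suppose that for every sequence v_1, v_2, … of letters of Σ and every strictly increasing sequence of positive integers p_1 < p_2 < … with p_{i+1} − p_i ≥ k for all i, there exists an infinite square-free word u over Σ with u_{p_i} = v_i for all i. Then the same property holds over Σ': for every sequence v'_1, v'_2, … of letters of Σ' and every strictly increasing sequence of positive integers p_1 < p_2 < … with p_{i+1} − p_i ≥ k for all i, there exists an infinite square-free word u' over Σ' with u'_{p_i} = v'_i for all i. (In other words, d(Σ') ≤ d(Σ) whenever Σ ⊆ Σ'; d is a decreasing function of the size of the alphabet.) -/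
theorem d_monotone_in_alphabet
    {α : Type*} [Fintype α] (S : Set α) (hS : S.Nonempty)
    (k : ℕ) (hk : 2 ≤ k)
    (h : ∀ v : ℕ → α, (∀ i : ℕ, 1 ≤ i → v i ∈ S) →
      ∀ q : ℕ → ℕ, 1 ≤ q 1 → (∀ i : ℕ, 1 ≤ i → q i + k ≤ q (i + 1)) →
      ∃ u : ℕ → α, (∀ i : ℕ, 1 ≤ i → u i ∈ S) ∧ SqFreeSeq u ∧
        ∀ i : ℕ, 1 ≤ i → u (q i) = v i) :
    ∀ v : ℕ → α, ∀ q : ℕ → ℕ, 1 ≤ q 1 →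
      (∀ i : ℕ, 1 ≤ i → q i + k ≤ q (i + 1)) →
      ∃ u : ℕ → α, SqFreeSeq u ∧ ∀ i : ℕ, 1 ≤ i → u (q i) = v i := by
  classical
  obtain ⟨s₀, hs₀⟩ := hS
  intro v q hq1 hqk
  -- `q` is strictly increasing on positive indices, hence injective there
  have hmono : ∀ a b : ℕ, 1 ≤ a → a < b → q a < q b := by
    intro a b ha hab
    induction b with
    | zero => omega
    | succ b ih =>
      have hb : a ≤ b := by omega
      rcases eq_or_lt_of_le hb with rfl | hb'
      · have := hqk a ha; omega
      · have h1 := ih hb'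
        have h2 := hqk b (by omega)
        omega
  have hinj : ∀ a b : ℕ, 1 ≤ a → 1 ≤ b → q a = q b → a = b := by
    intro a b ha hb hab
    rcases lt_trichotomy a b with h' | h' | h'
    · exact absurd (hmono a b ha h') (by omega)
    · exact h'
    · exact absurd (hmono b a hb h') (by omega)
  -- project `v` into `S`
  set v'' : ℕ → α := fun i => if v i ∈ S then v i else s₀ with hv''
  have hv''S : ∀ i : ℕ, 1 ≤ i → v'' i ∈ S := by
    intro i _
    simp only [hv'']
    split
    · assumption
    · exact hs₀
  obtain ⟨u, huS, husq, huq⟩ := h v'' hv''S q hq1 hqk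
  -- modified word: put the true (possibly outside `S`) letters back
  set u' : ℕ → α :=
    fun m => if hm : ∃ a, 1 ≤ a ∧ q a = m ∧ v a ∉ S then v hm.choose else u m with hu'
  -- value at a modified position
  have hmod : ∀ a : ℕ, 1 ≤ a → v a ∉ S → u' (q a) = v a := by
    intro a ha hva
    have hm : ∃ b, 1 ≤ b ∧ q b = q a ∧ v b ∉ S := ⟨a, ha, rfl, hva⟩
    obtain ⟨hb1, hb2, hb3⟩ := hm.choose_spec
    have : hm.choose = a := hinj _ _ hb1 ha hb2
    simp only [hu', dif_pos hm, this]
  have hmodS : ∀ m : ℕ, (∃ a, 1 ≤ a ∧ q a = m ∧ v a ∉ S) → u' m ∉ S := by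
    intro m hm
    obtain ⟨hb1, hb2, hb3⟩ := hm.choose_spec
    simpa only [hu', dif_pos hm] using hb3
  have hunmod : ∀ m : ℕ, ¬ (∃ a, 1 ≤ a ∧ q a = m ∧ v a ∉ S) → u' m = u m := by
    intro m hm
    simp only [hu', dif_neg hm]
  -- key pointwise lemma
  have key : ∀ p p' : ℕ, 1 ≤ p → 1 ≤ p' → u' p = u' p' → u p = u p' := by
    intro p p' hp hp' heq
    by_cases hc : ∃ a, 1 ≤ a ∧ q a = p ∧ v a ∉ S
    · by_cases hc' : ∃ a, 1 ≤ a ∧ q a = p' ∧ v a ∉ S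
      · -- both modified: both values in `u` are `s₀`
        obtain ⟨a, ha1, ha2, ha3⟩ := hc
        obtain ⟨b, hb1, hb2, hb3⟩ := hc'
        have hua : u p = s₀ := by
          rw [← ha2, huq a ha1]; simp only [hv'', if_neg ha3]
        have hub : u p' = s₀ := by
          rw [← hb2, huq b hb1]; simp only [hv'', if_neg hb3]
        rw [hua, hub]
      · exact absurd (heq ▸ hmodS p hc) (by rw [hunmod p' hc']; exact fun h' => h' (huS p' hp'))
    · by_cases hc' : ∃ a, 1 ≤ a ∧ q a = p' ∧ v a ∉ S
      · exact absurd (heq ▸ hmodS p' hc') (by rw [hunmod p hc]; exact fun h' => h' (huS p hp))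
      · rw [← hunmod p hc, ← hunmod p' hc', heq]
  refine ⟨u', ?_, ?_⟩
  · intro i n hi hn
    obtain ⟨k0, hk0, hne⟩ := husq i n hi hn
    exact ⟨k0, hk0, fun heq => hne (key _ _ (by omega) (by omega) heq)⟩
  · intro i hi
    by_cases hvi : v i ∈ S
    · have hc : ¬ (∃ a, 1 ≤ a ∧ q a = q i ∧ v a ∉ S) := by
        rintro ⟨a, ha1, ha2, ha3⟩
        exact ha3 (hinj a i ha1 hi ha2 ▸ hvi)
      rw [hunmod _ hc, huq i hi]
      simp only [hv'', if_pos hvi]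
    · exact hmod i hi hvi
end
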